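/- Fix m ≥ 1, n×n real matrices Φ₁,…,Φ_m, feedback matrices K₁,…,K_m (each p×n), a symmetric positive semidefinite n×n matrix q̃, a symmetric positive semidefinite p×p matrix r̃, and k ∈ ℕ. Let ξ_{i+1} = Φ_{σ(i)} ξ_i for i ≥ k with inputs u_{k+i} = K_{σ(k+i)} ξ_{k+i}, let Ψ = Φ_{σ(k+m−1)} ⋯ Φ_{σ(k)}, Π₀ = I, Π_i = Φ_{σ(k+i−1)} ⋯ Φ_{σ(k)} for 1 ≤ i ≤ m, M_x = Σ_{i=1}^{m} Π_iᵀ q̃ Π_i and M_u = Σ_{i=0}^{m−1} (K_{σ(k+i)} Π_i)ᵀ r̃ (K_{σ(k+i)} Π_i). Assume the families (j ↦ (Ψᵀ)ʲ M_x Ψʲ) and (j ↦ (Ψᵀ)ʲ M_u Ψʲ) are summable, with sums P_ξ and P_u respectively, and set P_{ξ+u} = P_ξ + P_u. Then the total infinite-horizon cost satisfies Σ_{i=0}^{∞} ( ξ_{k+i+1}ᵀ q̃ ξ_{k+i+1} + u_{k+i}ᵀ r̃ u_{k+i} ) = ξ_kᵀ P_{ξ+u} ξ_k, and P_{ξ+u}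 satisfies the Lyapunov equation P_{ξ+u} = Ψᵀ P_{ξ+u} Ψ + M_x + M_u. -/

import Mathlib

open Matrix

lemma quad_eq_aux {n p : ℕ} (A : Matrix (Fin p) (Fin n) ℝ) (Q : Matrix (Fin p) (Fin p) ℝ)
    (x : Fin n → ℝ) :
    (A *ᵥ x) ⬝ᵥ Q *ᵥ (A *ᵥ x) = x ⬝ᵥ (Aᵀ * Q * A) *ᵥ x := by
  conv_rhs => rw [Matrix.mul_assoc, ← mulVec_mulVec, dotProduct_mulVec,
    vecMul_transpose, ← mulVec_mulVec]

noncomputable def quadAddHom {n : ℕ} (x : Fin n → ℝ) : Matrix (Fin n) (Fin n) ℝ →+ ℝ where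
  toFun M := x ⬝ᵥ M *ᵥ x
  map_zero' := by simp
  map_add' M N := by simp [add_mulVec, dotProduct_add]

lemma quadAddHom_cont {n : ℕ} (x : Fin n → ℝ) : Continuous (quadAddHom x) :=
  continuous_const.dotProduct (continuous_id.matrix_mulVec continuous_const)

noncomputable def sandwichHom {n : ℕ} (A B : Matrix (Fin n) (Fin n) ℝ) :
    Matrix (Fin n) (Fin n) ℝ →+ Matrix (Fin n) (Fin n) ℝ where
  toFun M := A * M * B
  map_zero' := by simp
  map_add' M N := by simp [Matrix.mul_add, Matrix.add_mul]

lemma sandwichHom_cont {n : ℕ} (A B : Matrix (Fin n) (Fin n) ℝ) :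
    Continuous (sandwichHom A B) :=
  (continuous_const.matrix_mul continuous_id).matrix_mul continuous_const

/-- Total-cost formula for a linear m-periodic closed loop under periodic feedback
(the cost of multiplexed MPC when constraints are inactive).  `σ k = (k % m) + 1`;
`ξ_{i+1} = Φ_{σ(i)} ξ_i` for `i ≥ k` with inputs `u_{k+i} = K_{σ(k+i)} ξ_{k+i}`;
`Π_i` partial products with `Π₀ = I`, `Ψ = Π_m`, `M_x = Σ_{i=1}^m Π_iᵀ q̃ Π_i`,
`M_u = Σ_{i=0}^{m−1} (K_{σ(k+i)}Π_i)ᵀ r̃ (K_{σ(k+i)}Π_i)`.  If both matrix families are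
summable with sums `P_ξ` and `P_u`, and `P_{ξ+u} = P_ξ + P_u`, then
`Σ_{i=0}^∞ (ξ_{k+i+1}ᵀ q̃ ξ_{k+i+1} + u_{k+i}ᵀ r̃ u_{k+i}) = ξ_kᵀ P_{ξ+u} ξ_k` and
`P_{ξ+u} = Ψᵀ P_{ξ+u} Ψ + M_x + M_u`. -/
theorem stmt_10 {n p : ℕ} (m : ℕ) (hm : 1 ≤ m)
    (Φ : ℕ → Matrix (Fin n) (Fin n) ℝ)
    (K : ℕ → Matrix (Fin p) (Fin n) ℝ)
    (qt : Matrix (Fin n) (Fin n) ℝ) (hqt : qt.PosSemidef)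
    (rt : Matrix (Fin p) (Fin p) ℝ) (hrt : rt.PosSemidef)
    (σ : ℕ → ℕ) (hσ : ∀ k, σ k = k % m + 1)
    (k : ℕ) (ξ : ℕ → Fin n → ℝ)
    (hdyn : ∀ i, k ≤ i → ξ (i + 1) = (Φ (σ i)).mulVec (ξ i))
    (u : ℕ → Fin p → ℝ)
    (hu : ∀ i, u (k + i) = (K (σ (k + i))).mulVec (ξ (k + i)))
    (Pmat : ℕ → Matrix (Fin n) (Fin n) ℝ)
    (hPmat0 : Pmat 0 = 1)
    (hPmat : ∀ i, Pmat (i + 1) = Φ (σ (k + i)) * Pmat i)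
    (Ψ : Matrix (Fin n) (Fin n) ℝ) (hΨ : Ψ = Pmat m)
    (Mx : Matrix (Fin n) (Fin n) ℝ)
    (hMx : Mx = ∑ i ∈ Finset.Icc 1 m, (Pmat i)ᵀ * qt * Pmat i)
    (Mu : Matrix (Fin n) (Fin n) ℝ)
    (hMu : Mu = ∑ i ∈ Finset.range m,
      (K (σ (k + i)) * Pmat i)ᵀ * rt * (K (σ (k + i)) * Pmat i))
    (hsumx : Summable fun j : ℕ => (Ψᵀ) ^ j * Mx * Ψ ^ j)
    (hsumu : Summable fun j : ℕ => (Ψᵀ) ^ j * Mu * Ψ ^ j)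
    (Pξ : Matrix (Fin n) (Fin n) ℝ)
    (hPξ : Pξ = ∑' j : ℕ, (Ψᵀ) ^ j * Mx * Ψ ^ j)
    (Pu : Matrix (Fin n) (Fin n) ℝ)
    (hPu : Pu = ∑' j : ℕ, (Ψᵀ) ^ j * Mu * Ψ ^ j)
    (Pξu : Matrix (Fin n) (Fin n) ℝ)
    (hPξu : Pξu = Pξ + Pu) :
    (∑' i : ℕ, ((ξ (k + i + 1)) ⬝ᵥ (qt.mulVec (ξ (k + i + 1)))
          + (u (k + i)) ⬝ᵥ (rt.mulVec (u (k + i)))))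
        = (ξ k) ⬝ᵥ (Pξu.mulVec (ξ k))
      ∧ Pξu = Ψᵀ * Pξu * Ψ + Mx + Mu := by
  have hmne : NeZero m := ⟨by omega⟩
  set x : Fin n → ℝ := ξ k with hx
  -- the cost sequence
  set c : ℕ → ℝ := fun i => (ξ (k + i + 1)) ⬝ᵥ (qt.mulVec (ξ (k + i + 1)))
      + (u (k + i)) ⬝ᵥ (rt.mulVec (u (k + i))) with hc
  -- state in terms of Pmat
  have hξ : ∀ i, ξ (k + i) = Pmat i *ᵥ x := by
    intro i
    induction i with
    | zero => simp [hPmat0, hx]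
    | succ i ih =>
      have : k + (i + 1) = (k + i) + 1 := by omega
      rw [this, hdyn (k + i) (Nat.le_add_right _ _), ih, hPmat, ← mulVec_mulVec]
  -- periodicity of σ
  have hσp : ∀ i, σ (i + m) = σ i := by
    intro i; rw [hσ, hσ, Nat.add_mod_right]
  -- Pmat periodicity
  have hPm : ∀ i, Pmat (i + m) = Pmat i * Pmat m := by
    intro i
    induction i with
    | zero => rw [hPmat0, Nat.zero_add, Matrix.one_mul]
    | succ i ih =>
      have h1 : i + 1 + m = (i + m) + 1 := by omega
      rw [h1, hPmat, ← Nat.add_assoc, hσp, ih, hPmat, Matrix.mul_assoc]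
  have hPjm : ∀ j i, Pmat (j * m + i) = Pmat i * Ψ ^ j := by
    intro j
    induction j with
    | zero => intro i; simp
    | succ j ih =>
      intro i
      have h1 : (j + 1) * m + i = (j * m + i) + m := by ring
      rw [h1, hPm, ih, ← hΨ, Matrix.mul_assoc, ← pow_succ]
  -- the per-step matrices
  set D : ℕ → Matrix (Fin n) (Fin n) ℝ := fun r =>
    (Pmat (r + 1))ᵀ * qt * Pmat (r + 1)
      + (K (σ (k + r)) * Pmat r)ᵀ * rt * (K (σ (k + r)) * Pmat r) with hD
  have hDsum : ∑ r ∈ Finset.range m, D r = Mx + Mu := by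
    rw [hD, hMx, hMu, Finset.sum_add_distrib]
    congr 1
    rw [← Finset.Ico_add_one_right_eq_Icc, Finset.sum_Ico_eq_sum_range]
    simp [Nat.add_comm]
  -- value of c on each block element
  have hcval : ∀ (j : ℕ) (r : ℕ), r < m →
      c (j * m + r) = x ⬝ᵥ ((Ψᵀ) ^ j * D r * Ψ ^ j) *ᵥ x := by
    intro j r _
    have hσjm : σ (k + (j * m + r)) = σ (k + r) := by
      rw [hσ, hσ]
      congr 1
      have h1 : k + (j * m + r) = (k + r) + m * j := by ring
      rw [h1, Nat.add_mul_mod_self_left]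
    have hξ1 : ξ (k + (j * m + r) + 1) = (Pmat (r + 1) * Ψ ^ j) *ᵥ x := by
      have h1 : k + (j * m + r) + 1 = k + (j * m + (r + 1)) := by omega
      rw [h1, hξ, hPjm]
    have hu1 : u (k + (j * m + r)) = (K (σ (k + r)) * (Pmat r * Ψ ^ j)) *ᵥ x := by
      rw [hu, hσjm, hξ, hPjm, mulVec_mulVec]
    have hmat : (Ψᵀ) ^ j * D r * Ψ ^ j
        = (Pmat (r + 1) * Ψ ^ j)ᵀ * qt * (Pmat (r + 1) * Ψ ^ j)
          + (K (σ (k + r)) * (Pmat r * Ψ ^ j))ᵀ * rt * (K (σ (k + r)) * (Pmat r * Ψ ^ j)) := by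
      simp only [hD, transpose_mul, Matrix.transpose_pow, Matrix.mul_add, Matrix.add_mul,
        Matrix.mul_assoc]
    rw [hc]
    simp only [hξ1, hu1, quad_eq_aux, hmat, add_mulVec, dotProduct_add]
  -- nonnegativity of the cost terms
  have hcnonneg : ∀ i, 0 ≤ c i := by
    intro i
    have h1 := hqt.dotProduct_mulVec_nonneg (ξ (k + i + 1))
    have h2 := hrt.dotProduct_mulVec_nonneg (u (k + i))
    simp only [star_trivial] at h1 h2
    exact add_nonneg h1 h2
  -- combined matrix summability
  have hsum : Summable fun j : ℕ => (Ψᵀ) ^ j * (Mx + Mu) * Ψ ^ j := by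
    have := hsumx.add hsumu
    simpa [Matrix.mul_add, Matrix.add_mul] using this
  have htsum : (∑' j : ℕ, (Ψᵀ) ^ j * (Mx + Mu) * Ψ ^ j) = Pξ + Pu := by
    rw [hPξ, hPu, ← Summable.tsum_add hsumx hsumu]
    congr 1; funext j
    simp [Matrix.mul_add, Matrix.add_mul]
  -- scalar block sums
  have hblock : ∀ j : ℕ, ∑ r : Fin m, c (j * m + (r : ℕ))
      = x ⬝ᵥ ((Ψᵀ) ^ j * (Mx + Mu) * Ψ ^ j) *ᵥ x := by
    intro j
    have h1 : ∀ r : Fin m, c (j * m + (r : ℕ))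
        = quadAddHom x ((Ψᵀ) ^ j * D (r : ℕ) * Ψ ^ j) := fun r =>
      hcval j r r.isLt
    rw [Finset.sum_congr rfl (fun r _ => h1 r), ← map_sum]
    have h2 : ∑ r : Fin m, (Ψᵀ) ^ j * D (r : ℕ) * Ψ ^ j
        = (Ψᵀ) ^ j * (Mx + Mu) * Ψ ^ j := by
      rw [← hDsum, Finset.mul_sum, Finset.sum_mul, Fin.sum_univ_eq_sum_range
        (fun r => (Ψᵀ) ^ j * D r * Ψ ^ j) m]
    rw [h2]; rfl
  -- scalar summability of block sums
  have hscal : Summable fun j : ℕ => x ⬝ᵥ ((Ψᵀ) ^ j * (Mx + Mu) * Ψ ^ j) *ᵥ x :=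
    hsum.map (quadAddHom x) (quadAddHom_cont x)
  have hscal_tsum : (∑' j : ℕ, x ⬝ᵥ ((Ψᵀ) ^ j * (Mx + Mu) * Ψ ^ j) *ᵥ x)
      = x ⬝ᵥ (Pξ + Pu) *ᵥ x := by
    have h := (hsum.hasSum.map (quadAddHom x) (quadAddHom_cont x)).tsum_eq
    simp only [Function.comp_def] at h
    calc (∑' j : ℕ, x ⬝ᵥ ((Ψᵀ) ^ j * (Mx + Mu) * Ψ ^ j) *ᵥ x)
        = quadAddHom x (∑' j : ℕ, (Ψᵀ) ^ j * (Mx + Mu) * Ψ ^ j) := h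
      _ = x ⬝ᵥ (Pξ + Pu) *ᵥ x := by rw [htsum]; rfl
  -- summability over the product
  set f : ℕ × Fin m → ℝ := fun q => c (q.1 * m + (q.2 : ℕ)) with hf
  have hfsum : Summable f := by
    refine (summable_prod_of_nonneg (fun q => hcnonneg _)).2 ⟨fun j => Summable.of_finite, ?_⟩
    have : (fun j : ℕ => ∑' r : Fin m, f (j, r))
        = fun j : ℕ => x ⬝ᵥ ((Ψᵀ) ^ j * (Mx + Mu) * Ψ ^ j) *ᵥ x := by
      funext j; rw [tsum_fintype]; exact hblock j
    rw [this]; exact hscal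
  -- main cost identity
  have hcost : (∑' i : ℕ, c i) = x ⬝ᵥ Pξu *ᵥ x := by
    have he : (∑' q : ℕ × Fin m, f q) = ∑' i : ℕ, c i := by
      have := Equiv.tsum_eq (Nat.divModEquiv m).symm c
      rw [← this]
      congr 1
    rw [← he, Summable.tsum_prod' hfsum (fun j => Summable.of_finite)]
    have : ∀ j : ℕ, (∑' r : Fin m, f (j, r))
        = x ⬝ᵥ ((Ψᵀ) ^ j * (Mx + Mu) * Ψ ^ j) *ᵥ x := by
      intro j; rw [tsum_fintype]; exact hblock j
    rw [tsum_congr this, hscal_tsum, hPξu]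
  refine ⟨hcost, ?_⟩
  -- Lyapunov equation
  have hP : Pξu = ∑' j : ℕ, (Ψᵀ) ^ j * (Mx + Mu) * Ψ ^ j := by
    rw [hPξu, htsum]
  have hzero : (∑' j : ℕ, (Ψᵀ) ^ j * (Mx + Mu) * Ψ ^ j)
      = (Mx + Mu) + ∑' j : ℕ, (Ψᵀ) ^ (j + 1) * (Mx + Mu) * Ψ ^ (j + 1) := by
    rw [Summable.tsum_eq_zero_add hsum]; simp
  have hshift : (∑' j : ℕ, (Ψᵀ) ^ (j + 1) * (Mx + Mu) * Ψ ^ (j + 1))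
      = Ψᵀ * (∑' j : ℕ, (Ψᵀ) ^ j * (Mx + Mu) * Ψ ^ j) * Ψ := by
    have := (hsum.hasSum.map (sandwichHom Ψᵀ Ψ) (sandwichHom_cont Ψᵀ Ψ)).tsum_eq
    rw [Function.comp_def] at this
    have heq : (fun j : ℕ => sandwichHom Ψᵀ Ψ ((Ψᵀ) ^ j * (Mx + Mu) * Ψ ^ j))
        = fun j : ℕ => (Ψᵀ) ^ (j + 1) * (Mx + Mu) * Ψ ^ (j + 1) := by
      funext j
      show Ψᵀ * ((Ψᵀ) ^ j * (Mx + Mu) * Ψ ^ j) * Ψ = _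
      rw [pow_succ Ψ j, pow_succ' Ψᵀ j]
      noncomm_ring
    rw [heq] at this
    rw [this]; rfl
  have hfinal : Pξu = Mx + Mu + Ψᵀ * Pξu * Ψ := by
    conv_lhs => rw [hP, hzero, hshift, ← hP]
  exact hfinal.trans (by abel)
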